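/- For every negative integer m (m = −1, −2, …) and every z ∈ ℍ with z ≠ 0, the function z ↦ z^m (integer power, i.e. z^m = (z^{−m})⁻¹) is H-differentiable at z with H-derivative m · z^{m−1}. -/

import Mathlib

open scoped Quaternion
open Filter Topology

open ContinuousLinearMap

lemma aux (n : ℕ) {z : ℍ[ℝ]} (hz : z ≠ 0) :
    HasFDerivAt (fun w : ℍ[ℝ] => (w ^ (n+1))⁻¹)
      (∑ k ∈ Finset.range (n+1),
        -(mulLeftRight ℝ ℍ[ℝ] (z⁻¹ ^ (k+1)) (z⁻¹ ^ (n+1-k)))) z := by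
  induction n with
  | zero => simpa using hasFDerivAt_inv' (𝕜 := ℝ) hz
  | succ n ih =>
    have h2 := ih.mul' (hasFDerivAt_inv' (𝕜 := ℝ) hz)
    have heq : ((fun w : ℍ[ℝ] => (w ^ (n+1))⁻¹) * Inv.inv) = fun w : ℍ[ℝ] => (w ^ (n+2))⁻¹ := by
      funext w; rw [Pi.mul_apply, pow_succ' w (n+1), mul_inv_rev]
    rw [heq] at h2
    have hL : ((z ^ (n+1))⁻¹ • -(mulLeftRight ℝ ℍ[ℝ] z⁻¹ z⁻¹) +
        MulOpposite.op z⁻¹ • (∑ k ∈ Finset.range (n+1),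
          -(mulLeftRight ℝ ℍ[ℝ] (z⁻¹ ^ (k+1)) (z⁻¹ ^ (n+1-k)))))
        = ∑ k ∈ Finset.range (n+1+1),
            -(mulLeftRight ℝ ℍ[ℝ] (z⁻¹ ^ (k+1)) (z⁻¹ ^ (n+1+1-k))) := by
      refine ContinuousLinearMap.ext fun h => ?_
      simp only [ContinuousLinearMap.add_apply, ContinuousLinearMap.smul_apply,
        ContinuousLinearMap.smulRight_apply, ContinuousLinearMap.sum_apply,
        ContinuousLinearMap.neg_apply, mulLeftRight_apply, smul_eq_mul, MulOpposite.smul_eq_mul_unop,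
        MulOpposite.unop_op]
      conv_rhs => rw [Finset.sum_range_succ]
      conv_lhs => rw [← inv_pow, Finset.sum_mul]
      rw [add_comm]
      congr 1
      · refine Finset.sum_congr rfl fun k hk => ?_
        have hk' : k < n + 1 := Finset.mem_range.mp hk
        have h1 : n + 1 + 1 - k = (n + 1 - k) + 1 := by omega
        rw [h1, pow_succ, neg_mul]
        noncomm_ring
      · have h1 : n + 1 + 1 - (n + 1) = 1 := by omega
        rw [h1, pow_one, pow_succ, mul_neg]
        noncomm_ring
    rw [hL] at h2
    exact h2

/-- A function `f : ℍ → ℍ` is H-differentiable at `z₀` with H-derivative `d` if there exist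
sequences of quaternions `A, B` with `∑ ‖A k‖ * ‖B k‖ < ∞` such that
`f (z₀ + h) - f z₀ = ∑' k, A k * h * B k + ω h` with `‖ω h‖ / ‖h‖ → 0` as `h → 0`,
and `d = ∑' k, A k * B k`. -/
def HDiffAt (f : ℍ[ℝ] → ℍ[ℝ]) (z₀ d : ℍ[ℝ]) : Prop :=
  ∃ A B : ℕ → ℍ[ℝ],
    (Summable fun k => ‖A k‖ * ‖B k‖) ∧
    Filter.Tendsto
      (fun h : ℍ[ℝ] => ‖f (z₀ + h) - f z₀ - ∑' k, A k * h * B k‖ / ‖h‖)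
      (𝓝[≠] (0 : ℍ[ℝ])) (𝓝 0) ∧
    d = ∑' k, A k * B k

/-- For negative integers `m` and `z ≠ 0`, `z ↦ z^m` is H-differentiable at `z`
with H-derivative `m * z^(m-1)`. -/
theorem hDiffAt_zpow_neg (m : ℤ) (hm : m < 0) (z : ℍ[ℝ]) (hz : z ≠ 0) :
    HDiffAt (fun w => w ^ m) z ((m : ℍ[ℝ]) * z ^ (m - 1)) := by
  obtain ⟨n, rfl⟩ : ∃ n : ℕ, m = -((n : ℤ) + 1) := ⟨(-m - 1).toNat, by omega⟩
  have hf : ∀ w : ℍ[ℝ], w ^ (-((n:ℤ)+1)) = (w ^ (n+1))⁻¹ := fun w => by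
    rw [show -((n:ℤ)+1) = -(((n+1:ℕ)):ℤ) by push_cast; ring, zpow_neg, zpow_natCast]
  set y := z⁻¹ with hy
  refine ⟨fun k => if k < n+1 then -(y ^ (k+1)) else 0,
          fun k => if k < n+1 then y ^ (n+1-k) else 0, ?_, ?_, ?_⟩
  · apply summable_of_ne_finset_zero (s := Finset.range (n+1))
    intro k hk
    have : ¬ k < n + 1 := fun h => hk (Finset.mem_range.mpr h)
    simp [this]
  · have H := aux n hz
    have htsum : ∀ h : ℍ[ℝ],
        (∑' k, (if k < n+1 then -(y ^ (k+1)) else 0) * h *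
          (if k < n+1 then y ^ (n+1-k) else 0))
        = (∑ k ∈ Finset.range (n+1),
            -(ContinuousLinearMap.mulLeftRight ℝ ℍ[ℝ] (y^(k+1)) (y^(n+1-k)))) h := by
      intro h
      rw [tsum_eq_sum (s := Finset.range (n+1)) (fun k hk => by
        have : ¬ k < n + 1 := fun h' => hk (Finset.mem_range.mpr h')
        simp [this])]
      simp only [ContinuousLinearMap.sum_apply, ContinuousLinearMap.neg_apply,
        ContinuousLinearMap.mulLeftRight_apply]
      refine Finset.sum_congr rfl fun k hk => ?_
      have hk' : k < n + 1 := Finset.mem_range.mp hk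
      simp [hk', neg_mul]
    simp_rw [hf, htsum]
    have hcomp : Tendsto (fun h : ℍ[ℝ] => z + h) (𝓝 0) (𝓝 z) := by
      simpa using (tendsto_const_nhds (x := z)).add (tendsto_id (x := 𝓝 (0:ℍ[ℝ])))
    have h3 := (hasFDerivAt_iff_tendsto.mp H).comp hcomp
    refine Tendsto.mono_left ?_ nhdsWithin_le_nhds
    refine Tendsto.congr (fun h => ?_) h3
    simp only [Function.comp_apply, add_sub_cancel_left]
    rw [div_eq_inv_mul]
  · rw [tsum_eq_sum (s := Finset.range (n+1)) (fun k hk => by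
      have : ¬ k < n + 1 := fun h' => hk (Finset.mem_range.mpr h')
      simp [this])]
    have hterm : ∀ k ∈ Finset.range (n+1),
        (if k < n+1 then -(y ^ (k+1)) else 0) * (if k < n+1 then y ^ (n+1-k) else 0)
          = -(y ^ (n+2)) := by
      intro k hk
      have hk' : k < n + 1 := Finset.mem_range.mp hk
      rw [if_pos hk', if_pos hk', neg_mul, ← pow_add]
      congr 2
      omega
    rw [Finset.sum_congr rfl hterm, Finset.sum_const, Finset.card_range, nsmul_eq_mul]
    have hzp : z ^ ((-((n:ℤ)+1)) - 1) = y ^ (n+2) := by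
      rw [show (-((n:ℤ)+1)) - 1 = -(((n+2:ℕ)):ℤ) by push_cast; ring, zpow_neg,
        zpow_natCast, ← inv_pow]
    rw [hzp, mul_neg, ← neg_mul]
    congr 1
    push_cast
    ring_nf
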